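/- Let E be a category with finite limits, i : D ⥤ E a fully faithful functor admitting a left adjoint L, F = L ⋙ i the associated idempotent endofunctor with unit η, and assume F preserves finite limits. If a morphism u of E satisfies u ⊥ g for every F-local morphism g, then u is an F-equivalence. -/
import Mathlib


open CategoryTheory Limits

/-- `f` is orthogonal to `g` (`f ⊥ g`): every commutative square from `f` to `g` admits a
unique diagonal filler. -/
def Orth {E : Type*} [Category E] {A B X Y : E} (f : A ⟶ B) (g : X ⟶ Y) : Prop :=
  ∀ (u : A ⟶ X) (v : B ⟶ Y), u ≫ g = f ≫ v →
    ∃! d : B ⟶ X, f ≫ d = u ∧ d ≫ g = v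

/-- For an adjunction with fully faithful right adjoint, the unit is an isomorphism at
objects in the image of the right adjoint. -/
lemma unit_app_iObj_isIso {D E : Type*} [Category D] [Category E]
    (L : E ⥤ D) (i : D ⥤ E) [i.Full] [i.Faithful] (adj : L ⊣ i) (X : D) :
    IsIso (adj.unit.app (i.obj X)) := by
  have : IsIso (adj.counit.app X) := inferInstance
  have e := adj.right_triangle_components X
  have : adj.unit.app (i.obj X) = inv (i.map (adj.counit.app X)) :=
    IsIso.eq_inv_of_inv_hom_id e
  rw [this]; infer_instance

/-- For a reflective adjunction, `F η_A = η_{F A}` where `F = L ⋙ i`. -/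
lemma F_map_unit_eq {D E : Type*} [Category D] [Category E]
    (L : E ⥤ D) (i : D ⥤ E) [i.Full] [i.Faithful] (adj : L ⊣ i) (A : E) :
    (L ⋙ i).map (adj.unit.app A) = adj.unit.app ((L ⋙ i).obj A) := by
  have h1 : (L ⋙ i).map (adj.unit.app A) ≫ i.map (adj.counit.app (L.obj A)) = 𝟙 _ := by
    simp only [Functor.comp_map, ← i.map_comp, adj.left_triangle_components]
    simp
  have h2 : adj.unit.app ((L ⋙ i).obj A) ≫ i.map (adj.counit.app (L.obj A)) = 𝟙 _ :=
    adj.right_triangle_components (L.obj A)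
  have : IsIso (adj.counit.app (L.obj A)) := inferInstance
  have : IsIso (i.map (adj.counit.app (L.obj A))) := inferInstance
  rw [← cancel_mono (i.map (adj.counit.app (L.obj A))), h1, h2]; rfl

/-- For a reflective localization `L ⊣ i` with `F = L ⋙ i` preserving finite
limits, a morphism which is orthogonal to every `F`-local map is an `F`-equivalence. -/
theorem goodwillie_stmt_3 {D E : Type*} [Category D] [Category E] [HasFiniteLimits E]
    (L : E ⥤ D) (i : D ⥤ E) [i.Full] [i.Faithful] (adj : L ⊣ i)
    [PreservesFiniteLimits (L ⋙ i)]
    {A B : E} (u : A ⟶ B)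
    (h : ∀ {X Y : E} (g : X ⟶ Y),
      IsPullback (adj.unit.app X) g ((L ⋙ i).map g) (adj.unit.app Y) → Orth u g) :
    IsIso ((L ⋙ i).map u) := by
  have hA : IsIso (adj.unit.app ((L ⋙ i).obj A)) := unit_app_iObj_isIso L i adj _
  have hB : IsIso (adj.unit.app ((L ⋙ i).obj B)) := unit_app_iObj_isIso L i adj _
  -- `F u` is `F`-local since the units at `F A`, `F B` are isos
  have hloc : IsPullback (adj.unit.app ((L ⋙ i).obj A)) ((L ⋙ i).map u)
      ((L ⋙ i).map ((L ⋙ i).map u)) (adj.unit.app ((L ⋙ i).obj B)) :=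
    IsPullback.of_horiz_isIso ⟨by simpa using adj.unit.naturality ((L ⋙ i).map u)⟩
  obtain ⟨d, ⟨hd1, hd2⟩, -⟩ := h _ hloc (adj.unit.app A) (adj.unit.app B)
    (by simpa using (adj.unit.naturality u).symm)
  refine ⟨(L ⋙ i).map d ≫ inv (adj.unit.app ((L ⋙ i).obj A)), ?_, ?_⟩
  · rw [← Category.assoc, ← Functor.map_comp, hd1, F_map_unit_eq L i adj,
      IsIso.hom_inv_id]
  · have hnat : inv (adj.unit.app ((L ⋙ i).obj A)) ≫ (L ⋙ i).map u
        = (L ⋙ i).map ((L ⋙ i).map u) ≫ inv (adj.unit.app ((L ⋙ i).obj B)) := by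
      rw [IsIso.inv_comp_eq, ← Category.assoc, IsIso.eq_comp_inv]
      simpa using (adj.unit.naturality ((L ⋙ i).map u)).symm
    rw [Category.assoc, hnat, ← Category.assoc, ← Functor.map_comp, hd2,
      F_map_unit_eq L i adj, IsIso.hom_inv_id]
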